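/- Every tree with s ≥ 2 leaves and diameter d has at most sd/2 + 1 vertices. -/

import Mathlib

open SimpleGraph Finset

set_option linter.unusedSectionVars false
set_option maxHeartbeats 1000000

section TreeDiameterHelpers

variable {V : Type*} [DecidableEq V] {G : SimpleGraph V}


private lemma tpl (hT : G.IsTree) {a b : V} (p : G.Walk a b) (hp : p.IsPath) :
    p.length = G.dist a b := by
  obtain ⟨q, hq, hql⟩ := (Reachable.exists_path_of_dist ⟨p⟩)
  have := hT.IsAcyclic.path_unique ⟨p, hp⟩ ⟨q, hq⟩
  rw [← hql]
  exact congrArg SimpleGraph.Walk.length (congrArg Subtype.val this)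

private lemma uniq (hT : G.IsTree) {a b : V} (p q : G.Walk a b) (hp : p.IsPath)
    (hq : q.IsPath) : p = q :=
  congrArg Subtype.val (hT.IsAcyclic.path_unique ⟨p, hp⟩ ⟨q, hq⟩)

private lemma dist_split (hT : G.IsTree) {a b v : V} (p : G.Walk a b) (hp : p.IsPath)
    (hv : v ∈ p.support) : G.dist a b = G.dist a v + G.dist v b := by
  rw [← tpl hT p hp, ← tpl hT _ (hp.takeUntil hv), ← tpl hT _ (hp.dropUntil hv),
    ← SimpleGraph.Walk.length_append, SimpleGraph.Walk.take_spec]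

private lemma eq_of_dist_zero (hT : G.IsTree) {a b : V} (h : G.dist a b = 0) : a = b :=
  (hT.isConnected.dist_eq_zero_iff.mp h)

/-- converse of dist_split -/
private lemma mem_of_dist (hT : G.IsTree) {a b v : V} (p : G.Walk a b) (hp : p.IsPath)
    (h : G.dist a v + G.dist v b = G.dist a b) : v ∈ p.support := by
  obtain ⟨q1, hq1, hl1⟩ := (hT.isConnected.preconnected a v).exists_path_of_dist
  obtain ⟨q2, hq2, hl2⟩ := (hT.isConnected.preconnected v b).exists_path_of_dist
  set q := q1.append q2 with hq
  have hlen : q.length = G.dist a b := by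
    rw [SimpleGraph.Walk.length_append, hl1, hl2, h]
  have hqp : q.IsPath := by
    refine q.isPath_of_length_eq_dist hlen
  have := uniq hT p q hp hqp
  rw [this, hq, SimpleGraph.Walk.mem_support_append_iff]
  exact Or.inl q1.end_mem_support

/-- any walk from a to x and x to b covers the path a to b -/
private lemma supp_sub (hT : G.IsTree) {a b x : V} (p : G.Walk a b) (hp : p.IsPath)
    (q : G.Walk a x) (r : G.Walk x b) :
    ∀ y ∈ p.support, y ∈ q.support ∨ y ∈ r.support := by
  intro y hy
  have h := uniq hT p (q.append r).bypass hp ((q.append r).bypass_isPath)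
  rw [h] at hy
  have := SimpleGraph.Walk.support_bypass_subset _ hy
  rwa [SimpleGraph.Walk.mem_support_append_iff] at this

/-- on a path, vertices are determined by their distance from the start -/
private lemma eq_on_path (hT : G.IsTree) {a b v v' : V} (p : G.Walk a b) (hp : p.IsPath)
    (hv : v ∈ p.support) (hv' : v' ∈ p.support) (h : G.dist a v = G.dist a v') : v = v' := by
  have hspec := p.take_spec hv
  have hv'2 : v' ∈ (p.takeUntil v hv).support ∨ v' ∈ (p.dropUntil v hv).support := by
    rw [← SimpleGraph.Walk.mem_support_append_iff, hspec]; exact hv'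
  rcases hv'2 with h1 | h1
  · have := dist_split hT _ (hp.takeUntil hv) h1
    have h0 : G.dist v' v = 0 := by omega
    exact (eq_of_dist_zero hT h0).symm
  · have e1 := dist_split hT _ (hp.dropUntil hv) h1
    have e2 := dist_split hT p hp hv
    have e3 := dist_split hT p hp hv'
    have h0 : G.dist v v' = 0 := by omega
    exact eq_of_dist_zero hT h0

private lemma deg_pos (hT : G.IsTree) [Fintype V] [DecidableRel G.Adj] (hcard : 2 ≤ Fintype.card V) (v : V) :
    0 < G.degree v := by
  obtain ⟨w, hw⟩ := Fintype.exists_ne_of_one_lt_card (by omega) v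
  obtain ⟨p⟩ := hT.isConnected.preconnected v w
  cases p with
  | nil => exact absurd rfl hw.symm
  | cons h q => exact (G.degree_pos_iff_exists_adj v).mpr ⟨_, h⟩

private lemma exists_leaf (hT : G.IsTree) [Fintype V] [DecidableRel G.Adj] (hcard : 2 ≤ Fintype.card V) :
    ∀ (n : ℕ) {v c : V} (p : G.Walk v c), p.IsPath → Fintype.card V ≤ p.length + n →
    ∃ (ℓ : V) (q : G.Walk ℓ c), q.IsPath ∧ G.degree ℓ = 1 ∧ ∀ x ∈ p.support, x ∈ q.support := by
  intro n
  induction n with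
  | zero =>
    intro v c p hp hle
    exact absurd hp.length_lt (by omega)
  | succ n ih =>
    intro v c p hp hle
    by_cases hdeg : G.degree v = 1
    · exact ⟨v, p, hp, hdeg, fun x hx => hx⟩
    · have h2 : 2 ≤ G.degree v := by have := deg_pos hT hcard v; omega
      have h2' : 1 < (G.neighborFinset v).card := by rwa [G.card_neighborFinset_eq_degree]
      obtain ⟨z, hz, z', hz', hne⟩ := Finset.one_lt_card.mp h2'
      rw [mem_neighborFinset] at hz hz'
      have hkey : z ∉ p.support ∨ z' ∉ p.support := by
        by_contra hc
        push_neg at hc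
        obtain ⟨hc1, hc2⟩ := hc
        have d1 : G.dist v z = 1 := by
          rw [← tpl hT (SimpleGraph.Walk.cons hz SimpleGraph.Walk.nil) (by simp [hz.ne])]
          rfl
        have d2 : G.dist v z' = 1 := by
          rw [← tpl hT (SimpleGraph.Walk.cons hz' SimpleGraph.Walk.nil) (by simp [hz'.ne])]
          rfl
        exact hne (eq_on_path hT p hp hc1 hc2 (by omega))
      have hmain : ∀ z : V, G.Adj v z → z ∉ p.support →
          ∃ (ℓ : V) (q : G.Walk ℓ c), q.IsPath ∧ G.degree ℓ = 1 ∧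
            ∀ x ∈ p.support, x ∈ q.support := by
        intro z hadj hzp
        have hp' : (SimpleGraph.Walk.cons hadj.symm p).IsPath := by
          rw [SimpleGraph.Walk.cons_isPath_iff]; exact ⟨hp, hzp⟩
        obtain ⟨ℓ, q, hq, hdq, hsup⟩ := ih (SimpleGraph.Walk.cons hadj.symm p) hp'
          (by simp only [SimpleGraph.Walk.length_cons]; omega)
        exact ⟨ℓ, q, hq, hdq, fun x hx => hsup x (by simp [SimpleGraph.Walk.support_cons, hx])⟩
      rcases hkey with h | h
      · exact hmain z hz h
      · exact hmain z' hz' h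

private lemma exists_pair (hT : G.IsTree) :
    ∀ {u w : V} (p : G.Walk u w), p.IsPath → ∀ k, k + 1 ≤ p.length →
    ∃ c c', G.Adj c c' ∧ c ∈ p.support ∧ c' ∈ p.support ∧
      G.dist u c = k ∧ G.dist u c' = k + 1 := by
  intro u w p
  induction p with
  | nil => intro _ k hk; simp at hk
  | @cons u y w h q ih =>
    intro hp k hk
    match k with
    | 0 =>
      refine ⟨u, y, h, SimpleGraph.Walk.start_mem_support _, ?_, by simp, ?_⟩
      · simp [SimpleGraph.Walk.support_cons]
      · rw [← tpl hT (SimpleGraph.Walk.cons h SimpleGraph.Walk.nil) (by simp [h.ne])]; rfl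
    | k + 1 =>
      have hq : q.IsPath := hp.of_cons
      obtain ⟨c, c', hadj, hc, hc', d1, d2⟩ := ih hq k
        (by simp only [SimpleGraph.Walk.length_cons] at hk; omega)
      have hcp : c ∈ (SimpleGraph.Walk.cons h q).support := by
        simp [SimpleGraph.Walk.support_cons, hc]
      have hcp' : c' ∈ (SimpleGraph.Walk.cons h q).support := by
        simp [SimpleGraph.Walk.support_cons, hc']
      have e1 := dist_split hT _ hp hcp
      have e2 := dist_split hT q hq hc
      have e1' := dist_split hT _ hp hcp'
      have e2' := dist_split hT q hq hc'
      have e3 : (SimpleGraph.Walk.cons h q).length = G.dist u w := tpl hT _ hp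
      have e4 : q.length = G.dist y w := tpl hT q hq
      rw [SimpleGraph.Walk.length_cons] at e3
      exact ⟨c, c', hadj, hcp, hcp', by omega, by omega⟩


private lemma dist_adj (hT : G.IsTree) {a b : V} (h : G.Adj a b) : G.dist a b = 1 := by
  rw [← tpl hT (SimpleGraph.Walk.cons h SimpleGraph.Walk.nil) (by simp [h.ne])]; rfl

private lemma count (hT : G.IsTree) [Fintype V] [DecidableRel G.Adj] (c : V) (k : ℕ)
    (S : Finset V) (hc : c ∈ S)
    (hkey : ∀ v ∈ S, v ≠ c → ∃ ℓ, G.degree ℓ = 1 ∧ ℓ ∈ S ∧ G.dist c ℓ ≤ k ∧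
      G.dist c ℓ = G.dist c v + G.dist v ℓ) :
    S.card ≤ ((Finset.univ.filter fun v => G.degree v = 1) ∩ S).card * k + 1 := by
  classical
  have key' : ∀ v : V, ∃ ℓ, v ∈ S → v ≠ c → (G.degree ℓ = 1 ∧ ℓ ∈ S ∧ G.dist c ℓ ≤ k ∧
      G.dist c ℓ = G.dist c v + G.dist v ℓ) := by
    intro v
    by_cases h : v ∈ S ∧ v ≠ c
    · obtain ⟨ℓ, h1⟩ := hkey v h.1 h.2
      exact ⟨ℓ, fun _ _ => h1⟩
    · exact ⟨c, fun h1 h2 => absurd ⟨h1, h2⟩ h⟩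
  choose ℓf hℓf using key'
  have hmain : (S.erase c).card ≤
      (((Finset.univ.filter fun v => G.degree v = 1) ∩ S) ×ˢ Finset.range k).card := by
    apply Finset.card_le_card_of_injOn (fun v => (ℓf v, G.dist c v - 1))
    · intro v hv
      rw [Finset.mem_coe, Finset.mem_erase] at hv
      obtain ⟨hdeg, hmem, hle, hsplit⟩ := hℓf v hv.2 hv.1
      have hpos : 0 < G.dist c v := hT.isConnected.pos_dist_of_ne (Ne.symm hv.1)
      rw [Finset.mem_coe, Finset.mem_product, Finset.mem_inter, Finset.mem_filter, Finset.mem_range]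
      exact ⟨⟨⟨Finset.mem_univ _, hdeg⟩, hmem⟩, by dsimp only; omega⟩
    · intro v hv v' hv' heq
      rw [Finset.coe_erase, Set.mem_diff, Set.mem_singleton_iff] at hv hv'
      have hvS : v ∈ S := by simpa using hv.1
      have hv'S : v' ∈ S := by simpa using hv'.1
      obtain ⟨hdeg, hmem, hle, hsplit⟩ := hℓf v hvS hv.2
      obtain ⟨hdeg', hmem', hle', hsplit'⟩ := hℓf v' hv'S hv'.2
      have hℓeq : ℓf v = ℓf v' := (Prod.mk.injEq _ _ _ _ ▸ heq).1
      have hdeq' : G.dist c v - 1 = G.dist c v' - 1 := (Prod.mk.injEq _ _ _ _ ▸ heq).2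
      have hp1 : 0 < G.dist c v := hT.isConnected.pos_dist_of_ne (Ne.symm hv.2)
      have hp2 : 0 < G.dist c v' := hT.isConnected.pos_dist_of_ne (Ne.symm hv'.2)
      have hdeq : G.dist c v = G.dist c v' := by omega
      obtain ⟨q, hq, hql⟩ := (hT.isConnected.preconnected c (ℓf v)).exists_path_of_dist
      have hvq : v ∈ q.support := mem_of_dist hT q hq hsplit.symm
      have hv'q : v' ∈ q.support := by
        refine mem_of_dist hT q hq ?_
        rw [hℓeq] at hsplit ⊢
        omega
      exact eq_on_path hT q hq hvq hv'q hdeq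
  rw [Finset.card_product, Finset.card_range] at hmain
  have := Finset.card_erase_add_one hc
  omega

end TreeDiameterHelpers

theorem tree_card_le_of_leaves_diameter {V : Type*} [Fintype V] [DecidableEq V]
    (G : SimpleGraph V) [DecidableRel G.Adj] (hT : G.IsTree) (s d : ℕ)
    (hs : s = (Finset.univ.filter fun v => G.degree v = 1).card) (hs2 : 2 ≤ s)
    (hd : ∀ (u w : V) (p : G.Walk u w), p.IsPath → p.length ≤ d) :
    2 * Fintype.card V ≤ s * d + 2 := by
  classical
  set L := (Finset.univ.filter fun v => G.degree v = 1) with hLdef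
  have hcard2 : 2 ≤ Fintype.card V := by
    calc 2 ≤ L.card := hs ▸ hs2
    _ ≤ Fintype.card V := by simpa using Finset.card_le_univ L
  have hne : (Finset.univ ×ˢ Finset.univ : Finset (V × V)).Nonempty := by
    rw [Finset.nonempty_product]
    constructor <;> exact Finset.univ_nonempty_iff.mpr (Fintype.card_pos_iff.mp (by omega))
  obtain ⟨⟨u, w⟩, -, hmax'⟩ := Finset.exists_max_image _ (fun p : V × V => G.dist p.1 p.2) hne
  have hmax : ∀ x y : V, G.dist x y ≤ G.dist u w := fun x y => hmax' (x, y) (by simp)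
  set D := G.dist u w with hDdef
  obtain ⟨p, hp, hpl⟩ := (hT.isConnected.preconnected u w).exists_path_of_dist
  have hDd : D ≤ d := by rw [hDdef, ← hpl]; exact hd u w p hp
  have dc : ∀ a b : V, G.dist a b = G.dist b a := fun a b => SimpleGraph.dist_comm
  -- leaf-beyond in distance form
  have hleaf : ∀ (c v : V), ∃ ℓ, G.degree ℓ = 1 ∧ G.dist c ℓ = G.dist c v + G.dist v ℓ := by
    intro c v
    obtain ⟨pvc, hpvc, -⟩ := (hT.isConnected.preconnected v c).exists_path_of_dist
    obtain ⟨ℓ, q, hq, hdeg, hsup⟩ := exists_leaf hT hcard2 (Fintype.card V) pvc hpvc (by omega)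
    have hvq : v ∈ q.support := hsup v pvc.start_mem_support
    have := dist_split hT q hq hvq
    refine ⟨ℓ, hdeg, ?_⟩
    have h1 := dc c ℓ
    have h2 := dc c v
    have h3 := dc v ℓ
    omega
  rcases Nat.eq_zero_or_pos D with hD0 | hDpos
  · -- D = 0 : all vertices equal, contradiction with card ≥ 2
    exfalso
    have : ∀ x y : V, x = y := fun x y =>
      eq_of_dist_zero hT (Nat.le_antisymm (hD0 ▸ hmax x y) (Nat.zero_le _))
    have : Fintype.card V ≤ 1 := Fintype.card_le_one_iff.mpr fun a b => this a b
    omega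
  rcases Nat.even_or_odd D with ⟨k, hk⟩ | ⟨k, hk⟩
  · -- even case, D = 2k, k ≥ 1
    have hk1 : 1 ≤ k := by omega
    obtain ⟨c, c', -, hcp, -, hduc, -⟩ := exists_pair hT p hp k (by omega)
    have hdcw : G.dist c w = k := by
      have := dist_split hT p hp hcp
      omega
    have hrad : ∀ x, G.dist c x ≤ k := by
      intro x
      obtain ⟨q1, hq1, -⟩ := (hT.isConnected.preconnected u x).exists_path_of_dist
      obtain ⟨q2, hq2, -⟩ := (hT.isConnected.preconnected x w).exists_path_of_dist
      rcases supp_sub hT p hp q1 q2 c hcp with h | h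
      · have := dist_split hT q1 hq1 h
        have := hmax u x
        omega
      · have := dist_split hT q2 hq2 h
        have := hmax x w
        have := dc x c
        omega
    have hcount := count hT c k Finset.univ (Finset.mem_univ c) ?_
    · rw [Finset.inter_univ, Finset.card_univ, ← hLdef, ← hs] at hcount
      have h1 : s * (2 * k) ≤ s * d := Nat.mul_le_mul_left s (by omega)
      have h2 : s * (2 * k) = 2 * (s * k) := by ring
      omega
    · intro v _ hvc
      obtain ⟨ℓ, hdeg, hsplit⟩ := hleaf c v
      exact ⟨ℓ, hdeg, Finset.mem_univ _, hrad ℓ, hsplit⟩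
  · -- odd case, D = 2k+1
    obtain ⟨c1, c2, hadj, hc1p, hc2p, hd1, hd2⟩ := exists_pair hT p hp k (by omega)
    have hd1w : G.dist c1 w = k + 1 := by
      have := dist_split hT p hp hc1p; omega
    have hd2w : G.dist c2 w = k := by
      have := dist_split hT p hp hc2p; omega
    have hd12 : G.dist c1 c2 = 1 := dist_adj hT hadj
    have hd21 : G.dist c2 c1 = 1 := (dc c2 c1).trans hd12
    -- dichotomy
    have hdich : ∀ x : V, G.dist c2 x = G.dist c1 x + 1 ∨ G.dist c1 x = G.dist c2 x + 1 := by
      intro x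
      obtain ⟨q, hq, -⟩ := (hT.isConnected.preconnected c2 x).exists_path_of_dist
      by_cases hmem : c1 ∈ q.support
      · left
        have := dist_split hT q hq hmem
        omega
      · right
        have hpath : (SimpleGraph.Walk.cons hadj q).IsPath := by
          rw [SimpleGraph.Walk.cons_isPath_iff]; exact ⟨hq, hmem⟩
        have := tpl hT _ hpath
        rw [SimpleGraph.Walk.length_cons] at this
        have := tpl hT q hq
        omega
    -- radius bounds
    have hradA : ∀ x, G.dist c2 x = G.dist c1 x + 1 → G.dist c1 x ≤ k := by
      intro x hA
      obtain ⟨q1, hq1, -⟩ := (hT.isConnected.preconnected u x).exists_path_of_dist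
      obtain ⟨q2, hq2, -⟩ := (hT.isConnected.preconnected x w).exists_path_of_dist
      rcases supp_sub hT p hp q1 q2 c1 hc1p with h | h
      · rcases supp_sub hT p hp q1 q2 c2 hc2p with h' | h'
        · have e1 := dist_split hT q1 hq1 h
          have e2 := dist_split hT q1 hq1 h'
          have := dc c1 x
          have := dc c2 x
          omega
        · have e1 := dist_split hT q2 hq2 h'
          have e2 := hmax x w
          have := dc x c2
          omega
      · have e1 := dist_split hT q2 hq2 h
        have e2 := hmax x w
        have := dc x c1
        omega
    have hradB : ∀ x, G.dist c1 x = G.dist c2 x + 1 → G.dist c2 x ≤ k := by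
      intro x hB
      obtain ⟨q1, hq1, -⟩ := (hT.isConnected.preconnected w x).exists_path_of_dist
      obtain ⟨q2, hq2, -⟩ := (hT.isConnected.preconnected x u).exists_path_of_dist
      have hc2r : c2 ∈ p.reverse.support := by
        rw [SimpleGraph.Walk.support_reverse]; exact List.mem_reverse.mpr hc2p
      have hc1r : c1 ∈ p.reverse.support := by
        rw [SimpleGraph.Walk.support_reverse]; exact List.mem_reverse.mpr hc1p
      rcases supp_sub hT p.reverse hp.reverse q1 q2 c2 hc2r with h | h
      · rcases supp_sub hT p.reverse hp.reverse q1 q2 c1 hc1r with h' | h'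
        · have e1 := dist_split hT q1 hq1 h
          have e2 := dist_split hT q1 hq1 h'
          have := dc c2 x
          have := dc c1 x
          have := dc w c2
          have := dc w c1
          omega
        · have e1 := dist_split hT q2 hq2 h'
          have e2 := hmax x u
          have := dc x c1
          have := dc u c1
          omega
      · have e1 := dist_split hT q2 hq2 h
        have e2 := hmax x u
        have := dc x c2
        have := dc u c2
        omega
    -- side sets
    set A := Finset.univ.filter (fun x => G.dist c2 x = G.dist c1 x + 1) with hAdef
    set B := Finset.univ.filter (fun x => G.dist c1 x = G.dist c2 x + 1) with hBdef
    have hc1A : c1 ∈ A := by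
      rw [hAdef, Finset.mem_filter]
      exact ⟨Finset.mem_univ _, by rw [SimpleGraph.dist_self]; omega⟩
    have hc2B : c2 ∈ B := by
      rw [hBdef, Finset.mem_filter]
      exact ⟨Finset.mem_univ _, by rw [SimpleGraph.dist_self]; omega⟩
    -- leaf keys staying on the side
    have hkeyA : ∀ v ∈ A, v ≠ c1 → ∃ ℓ, G.degree ℓ = 1 ∧ ℓ ∈ A ∧ G.dist c1 ℓ ≤ k ∧
        G.dist c1 ℓ = G.dist c1 v + G.dist v ℓ := by
      intro v hvA hvc
      rw [hAdef, Finset.mem_filter] at hvA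
      obtain ⟨ℓ, hdeg, hsplit⟩ := hleaf c1 v
      have hℓA : ℓ ∈ A := by
        rcases hdich ℓ with hgood | hbad
        · rw [hAdef, Finset.mem_filter]; exact ⟨Finset.mem_univ _, hgood⟩
        · exfalso
          obtain ⟨q, hq, -⟩ := (hT.isConnected.preconnected c1 ℓ).exists_path_of_dist
          have hvq : v ∈ q.support := mem_of_dist hT q hq hsplit.symm
          have hc2q : c2 ∈ q.support := mem_of_dist hT q hq (by omega)
          have hspec := q.take_spec hvq
          have hc2cases : c2 ∈ (q.takeUntil v hvq).support ∨ c2 ∈ (q.dropUntil v hvq).support := by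
            rw [← SimpleGraph.Walk.mem_support_append_iff, hspec]; exact hc2q
          have hpos : 0 < G.dist c1 v := hT.isConnected.pos_dist_of_ne (Ne.symm hvc)
          rcases hc2cases with h | h
          · have := dist_split hT _ (hq.takeUntil hvq) h
            have := dc v c2
            omega
          · have := dist_split hT _ (hq.dropUntil hvq) h
            have := dc v c2
            omega
      refine ⟨ℓ, hdeg, hℓA, ?_, hsplit⟩
      apply hradA
      rw [hAdef, Finset.mem_filter] at hℓA
      exact hℓA.2
    have hkeyB : ∀ v ∈ B, v ≠ c2 → ∃ ℓ, G.degree ℓ = 1 ∧ ℓ ∈ B ∧ G.dist c2 ℓ ≤ k ∧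
        G.dist c2 ℓ = G.dist c2 v + G.dist v ℓ := by
      intro v hvB hvc
      rw [hBdef, Finset.mem_filter] at hvB
      obtain ⟨ℓ, hdeg, hsplit⟩ := hleaf c2 v
      have hℓB : ℓ ∈ B := by
        rcases hdich ℓ with hbad | hgood
        · exfalso
          obtain ⟨q, hq, -⟩ := (hT.isConnected.preconnected c2 ℓ).exists_path_of_dist
          have hvq : v ∈ q.support := mem_of_dist hT q hq hsplit.symm
          have hc1q : c1 ∈ q.support := mem_of_dist hT q hq (by omega)
          have hspec := q.take_spec hvq
          have hc1cases : c1 ∈ (q.takeUntil v hvq).support ∨ c1 ∈ (q.dropUntil v hvq).support := by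
            rw [← SimpleGraph.Walk.mem_support_append_iff, hspec]; exact hc1q
          have hpos : 0 < G.dist c2 v := hT.isConnected.pos_dist_of_ne (Ne.symm hvc)
          rcases hc1cases with h | h
          · have := dist_split hT _ (hq.takeUntil hvq) h
            have := dc v c1
            omega
          · have := dist_split hT _ (hq.dropUntil hvq) h
            have := dc v c1
            omega
        · rw [hBdef, Finset.mem_filter]; exact ⟨Finset.mem_univ _, hgood⟩
      refine ⟨ℓ, hdeg, hℓB, ?_, hsplit⟩
      apply hradB
      rw [hBdef, Finset.mem_filter] at hℓB
      exact hℓB.2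
    have hcountA := count hT c1 k A hc1A hkeyA
    have hcountB := count hT c2 k B hc2B hkeyB
    rw [← hLdef] at hcountA hcountB
    -- partition facts
    have hdisj : Disjoint A B := by
      rw [Finset.disjoint_left]
      intro x hxA hxB
      rw [hAdef, Finset.mem_filter] at hxA
      rw [hBdef, Finset.mem_filter] at hxB
      omega
    have hunion : A ∪ B = Finset.univ := by
      apply Finset.eq_univ_of_forall
      intro x
      rcases hdich x with h | h
      · exact Finset.mem_union_left _ (by rw [hAdef, Finset.mem_filter]; exact ⟨Finset.mem_univ _, h⟩)
      · exact Finset.mem_union_right _ (by rw [hBdef, Finset.mem_filter]; exact ⟨Finset.mem_univ _, h⟩)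
    have hcardV : A.card + B.card = Fintype.card V := by
      rw [← Finset.card_union_of_disjoint hdisj, hunion, Finset.card_univ]
    have hLsplit : (L ∩ A).card + (L ∩ B).card ≤ s := by
      rw [← Finset.card_union_of_disjoint (hdisj.mono Finset.inter_subset_right Finset.inter_subset_right)]
      calc ((L ∩ A) ∪ (L ∩ B)).card ≤ L.card :=
            Finset.card_le_card (Finset.union_subset Finset.inter_subset_left Finset.inter_subset_left)
        _ = s := hs.symm
    have harith : (L ∩ A).card * k + (L ∩ B).card * k ≤ s * k := by
      rw [← Nat.add_mul]
      exact Nat.mul_le_mul_right k hLsplit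
    have hfin : s * (2 * k + 1) + 2 ≤ s * d + 2 := by
      have : s * (2 * k + 1) ≤ s * d := Nat.mul_le_mul_left s (by omega)
      omega
    have : s * (2*k) + 4 ≤ s * (2*k+1) + 2 := by nlinarith
    have : s * (2*k) = 2 * (s * k) := by ring
    omega
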